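/- arXiv:2010.13475 — 3 statements merged into one kernel-verified Lean document; each statement's English description precedes it below -/
import Mathlib

section
/- For every integer n ≥ 1 and every r with 0 ≤ r ≤ n−1, the centralizer of a^{2r+1} in U_{6n} is the cyclic subgroup generated by a, i.e., C_{U_{6n}}(a^{2r+1}) = ⟨a⟩, a subgroup of order 2n. -/
/-- The inversion automorphism of `Multiplicative (ZMod 3)` (i.e. `b ↦ b⁻¹`). -/
def negAut : MulAut (Multiplicative (ZMod 3)) := MulEquiv.inv (Multiplicative (ZMod 3))

lemma negAut_sq : negAut * negAut = 1 := by
  ext x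
  simp [negAut]

/-- The action of `ZMod (2*n)` on `Multiplicative (ZMod 3)`, where the generator acts
by inversion (negation). -/
def U6nAct (n : ℕ) : Multiplicative (ZMod (2 * n)) →* MulAut (Multiplicative (ZMod 3)) :=
  AddMonoidHom.toMultiplicativeLeft
    (ZMod.lift (2 * n) ⟨zmultiplesHom _ (Additive.ofMul negAut), by
      show ((2 * n : ℕ) : ℤ) • Additive.ofMul negAut = 0
      have : negAut ^ (2 * n) = 1 := by
        rw [pow_mul, pow_two, negAut_sq, one_pow]
      rw [← zpow_natCast negAut, Nat.cast_mul] at this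
      rw [show ((2 * n : ℕ) : ℤ) • Additive.ofMul negAut
            = Additive.ofMul (negAut ^ ((2 * n : ℕ) : ℤ)) from rfl]
      rw [Nat.cast_mul, this]; rfl⟩)

/-- The group `U_{6n} = ⟨a, b | a^(2n) = b³ = 1, a⁻¹ b a = b⁻¹⟩`, realized as the
semidirect product `(ZMod 3) ⋊ (ZMod (2n))` where the generator of `ZMod (2n)` acts by
negation. -/
abbrev U6n (n : ℕ) := SemidirectProduct (Multiplicative (ZMod 3))
    (Multiplicative (ZMod (2 * n))) (U6nAct n)

/-- The generator `a` of `U_{6n}`, of order `2n`. -/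
def Ua (n : ℕ) : U6n n := SemidirectProduct.inr (Multiplicative.ofAdd 1)

/-- The generator `b` of `U_{6n}`, of order `3`. -/
def Ub (n : ℕ) : U6n n := SemidirectProduct.inl (Multiplicative.ofAdd 1)

/-- The non-commuting graph of `U_{6n}`: vertices are the non-central elements, two
distinct vertices are adjacent iff they do not commute. -/
def ncGraph (n : ℕ) : SimpleGraph {x : U6n n // x ∉ Subgroup.center (U6n n)} where
  Adj u v := u.val * v.val ≠ v.val * u.val
  symm := ⟨fun _ _ h => fun e => h e.symm⟩
  loopless := ⟨fun _ h => h rfl⟩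

lemma U6nAct_apply (n : ℕ) (k : ℤ) :
    U6nAct n (Multiplicative.ofAdd ((k : ZMod (2 * n)))) = negAut ^ k := by
  simp only [U6nAct, AddMonoidHom.toMultiplicativeLeft, Equiv.coe_fn_mk, MonoidHom.coe_mk,
    OneHom.coe_mk, toAdd_ofAdd]
  change Additive.toMul (ZMod.lift (2 * n) _ ((k : ZMod (2 * n)))) = _
  rw [ZMod.lift_coe]
  rfl

lemma Ua_pow (n : ℕ) (k : ℕ) :
    Ua n ^ k = SemidirectProduct.inr (Multiplicative.ofAdd ((k : ZMod (2 * n)))) := by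
  rw [Ua, ← map_pow]
  congr 1
  rw [← ofAdd_nsmul, nsmul_eq_mul, mul_one]

lemma negAut_odd (r : ℕ) : negAut ^ ((2 * r + 1 : ℕ) : ℤ) = negAut := by
  rw [zpow_natCast, pow_succ, pow_mul, pow_two, negAut_sq, one_pow, one_mul]

/-- For `0 ≤ r ≤ n-1`, the centralizer of `a^(2r+1)` in `U_{6n}` is the cyclic subgroup
generated by `a`, which has order `2n`. -/
theorem U6n_centralizer_odd_a (n : ℕ) (hn : 1 ≤ n) (r : ℕ) (hr : r < n) :
    Subgroup.centralizer {Ua n ^ (2 * r + 1)} = Subgroup.zpowers (Ua n) ∧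
    Nat.card (Subgroup.centralizer {Ua n ^ (2 * r + 1)} : Subgroup (U6n n)) = 2 * n := by
  have : NeZero (2 * n) := ⟨by omega⟩
  have hcent : Subgroup.centralizer {Ua n ^ (2 * r + 1)}
      = Subgroup.zpowers (Ua n) := by
    ext g
    rw [Subgroup.mem_centralizer_singleton_iff]
    constructor
    · intro h
      have hl := congrArg SemidirectProduct.left h
      rw [Ua_pow] at hl
      simp only [SemidirectProduct.mul_left, SemidirectProduct.left_inr, one_mul,
        SemidirectProduct.right_inr, map_one, MulAut.one_apply] at hl
      have hk : ((2 * r + 1 : ℕ) : ZMod (2 * n)) = (((2 * r + 1 : ℕ) : ℤ) : ZMod (2 * n)) := by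
        push_cast; ring
      rw [hk, U6nAct_apply, negAut_odd] at hl
      rw [mul_one] at hl
      have hgl : g.left = 1 := by
        have : g.left = g.left⁻¹ := hl
        revert this
        generalize g.left = x
        revert x
        decide
      refine ⟨(g.right.toAdd.val : ℤ), ?_⟩
      show Ua n ^ ((g.right.toAdd.val : ℤ)) = g
      rw [zpow_natCast, Ua_pow]
      refine SemidirectProduct.ext ?_ ?_
      · simp [hgl]
      · simp only [SemidirectProduct.right_inr]
        rw [show ((g.right.toAdd.val : ℕ) : ZMod (2*n)) = g.right.toAdd from
          ZMod.natCast_rightInverse g.right.toAdd]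
        rfl
    · rintro ⟨m, rfl⟩
      exact ((((Commute.refl (Ua n)).pow_left (2 * r + 1)).zpow_right m).symm).eq
  refine ⟨hcent, ?_⟩
  rw [hcent, Nat.card_zpowers, Ua,
    orderOf_injective SemidirectProduct.inr SemidirectProduct.inr_injective,
    orderOf_ofAdd_eq_addOrderOf, ZMod.addOrderOf_one]
end

section
/- For every integer n ≥ 1, the number of edges of the non-commuting graph Γ(U_{6n}) is 9n². -/
/-! ### Auxiliary lemmas -/

lemma negAut_pow (m : ℕ) : negAut ^ m = if m % 2 = 0 then 1 else negAut := by
  induction m with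
  | zero => simp
  | succ k ih =>
    rw [pow_succ, ih]
    rcases Nat.even_or_odd k with h | h
    · simp [Nat.even_iff.mp h, Nat.succ_mod_two_eq_one_iff.mpr (Nat.even_iff.mp h)]
    · have h1 := Nat.odd_iff.mp h
      simp [h1, Nat.succ_mod_two_eq_zero_iff.mpr h1, negAut_sq]

lemma act_intCast (n : ℕ) (m : ℤ) :
    U6nAct n (Multiplicative.ofAdd ((m : ZMod (2*n)))) = negAut ^ m := by
  have : U6nAct n (Multiplicative.ofAdd ((m : ZMod (2*n))))
      = Additive.toMul (ZMod.lift (2*n) ⟨zmultiplesHom _ (Additive.ofMul negAut), by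
      show ((2 * n : ℕ) : ℤ) • Additive.ofMul negAut = 0
      have : negAut ^ (2 * n) = 1 := by
        rw [pow_mul, pow_two, negAut_sq, one_pow]
      rw [← zpow_natCast negAut, Nat.cast_mul] at this
      rw [show ((2 * n : ℕ) : ℤ) • Additive.ofMul negAut
            = Additive.ofMul (negAut ^ ((2 * n : ℕ) : ℤ)) from rfl]
      rw [Nat.cast_mul, this]; rfl⟩ ((m : ZMod (2*n)))) := rfl
  rw [this, ZMod.lift_coe]
  show Additive.toMul (m • Additive.ofMul negAut) = negAut ^ m
  rfl

lemma act_apply (n : ℕ) [NeZero (2*n)] (k : ZMod (2*n)) (b : Multiplicative (ZMod 3)) :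
    (U6nAct n (Multiplicative.ofAdd k)) b = if k.val % 2 = 0 then b else b⁻¹ := by
  have hk : k = (((k.val : ℤ) : ZMod (2*n))) := by
    push_cast
    rw [ZMod.natCast_val, ZMod.cast_id]
  conv_lhs => rw [hk]
  rw [act_intCast, zpow_natCast, negAut_pow]
  split_ifs <;> simp [negAut]

lemma act_apply' (n : ℕ) [NeZero (2*n)] (k : Multiplicative (ZMod (2*n)))
    (b : Multiplicative (ZMod 3)) :
    (U6nAct n k) b = if (Multiplicative.toAdd k).val % 2 = 0 then b else b⁻¹ :=
  act_apply n (Multiplicative.toAdd k) b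

lemma commute_iff (n : ℕ) [NeZero (2*n)] (g h : U6n n) :
    g * h = h * g ↔
      (if (Multiplicative.toAdd h.right).val % 2 = 0 then (0 : ZMod 3) else 2)
          * (Multiplicative.toAdd g.left)
        = (if (Multiplicative.toAdd g.right).val % 2 = 0 then (0 : ZMod 3) else 2)
          * (Multiplicative.toAdd h.left) := by
  rw [SemidirectProduct.ext_iff]
  have hr : (g * h).right = (h * g).right := by
    rw [SemidirectProduct.mul_right, SemidirectProduct.mul_right]
    exact mul_comm _ _
  rw [and_iff_left hr]
  rw [SemidirectProduct.mul_left, SemidirectProduct.mul_left, act_apply', act_apply']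
  set b1 := Multiplicative.toAdd g.left with hb1
  set b2 := Multiplicative.toAdd h.left with hb2
  have e1 : g.left = Multiplicative.ofAdd b1 := rfl
  have e2 : h.left = Multiplicative.ofAdd b2 := rfl
  rw [e1, e2]
  split_ifs <;>
    · constructor
      · intro H
        have H' := congrArg Multiplicative.toAdd H
        simp only [toAdd_mul, toAdd_ofAdd, toAdd_inv] at H'
        linear_combination H'
      · intro H
        apply Multiplicative.toAdd.injective
        simp only [toAdd_mul, toAdd_ofAdd, toAdd_inv]
        linear_combination H

/-- the coordinate equivalence -/
def eU (n : ℕ) : U6n n ≃ ZMod 3 × ZMod (2*n) where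
  toFun g := (Multiplicative.toAdd g.left, Multiplicative.toAdd g.right)
  invFun p := ⟨Multiplicative.ofAdd p.1, Multiplicative.ofAdd p.2⟩
  left_inv g := rfl
  right_inv p := rfl

lemma card_range_mod (n r : ℕ) (hr : r < 2) :
    ((Finset.range (2*n)).filter (fun i => i % 2 = r)).card = n := by
  induction n with
  | zero => simp
  | succ m ih =>
    have h2 : 2 * (m+1) = (2*m + 1) + 1 := by ring
    rw [h2, Finset.range_add_one, Finset.range_add_one]
    simp only [Finset.filter_insert]
    interval_cases r
    · rw [if_neg (by omega), if_pos (by omega),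
        Finset.card_insert_of_notMem (by simp), ih]
    · rw [if_pos (by omega), if_neg (by omega),
        Finset.card_insert_of_notMem (by simp), ih]

lemma card_even_zmod (n : ℕ) [NeZero (2*n)] :
    (Finset.univ.filter (fun k : ZMod (2*n) => k.val % 2 = 0)).card = n := by
  conv_rhs => rw [← card_range_mod n 0 (by omega)]
  symm
  refine Finset.card_bij (fun i _ => ((i : ℕ) : ZMod (2*n))) ?_ ?_ ?_
  · intro i hi
    simp only [Finset.mem_filter, Finset.mem_range] at hi
    simp [ZMod.val_natCast_of_lt hi.1, hi.2]
  · intro i hi j hj hij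
    simp only [Finset.mem_filter, Finset.mem_range] at hi hj
    have := congrArg ZMod.val hij
    rwa [ZMod.val_natCast_of_lt hi.1, ZMod.val_natCast_of_lt hj.1] at this
  · intro k hk
    simp only [Finset.mem_filter, Finset.mem_univ, true_and] at hk
    refine ⟨k.val, ?_, ?_⟩
    · simp [Finset.mem_filter, Finset.mem_range, ZMod.val_lt, hk]
    · simp [ZMod.natCast_val, ZMod.cast_id]

lemma card_odd_zmod (n : ℕ) [NeZero (2*n)] :
    (Finset.univ.filter (fun k : ZMod (2*n) => ¬ k.val % 2 = 0)).card = n := by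
  have h := Finset.card_filter_add_card_filter_not
    (s := (Finset.univ : Finset (ZMod (2*n)))) (p := fun k => k.val % 2 = 0)
  rw [card_even_zmod, Finset.card_univ, ZMod.card] at h
  omega

lemma sum_parity (n : ℕ) [NeZero (2*n)] (a b : ℕ) :
    (∑ k : ZMod (2*n), if k.val % 2 = 0 then a else b) = n*a + n*b := by
  rw [Finset.sum_ite, Finset.sum_const, Finset.sum_const, card_even_zmod, card_odd_zmod,
    smul_eq_mul, smul_eq_mul]

lemma countQ (n : ℕ) [NeZero (2*n)] :
    (Finset.univ.filter
      (fun q : (ZMod (2*n) × ZMod (2*n)) × (ZMod 3 × ZMod 3) =>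
        (if q.1.2.val % 2 = 0 then (0 : ZMod 3) else 2) * q.2.1
          = (if q.1.1.val % 2 = 0 then (0 : ZMod 3) else 2) * q.2.2)).card = 18 * n^2 := by
  rw [Finset.card_filter, Fintype.sum_prod_type]
  have inner : ∀ kk : ZMod (2*n) × ZMod (2*n),
      (∑ bb : ZMod 3 × ZMod 3,
        if (if kk.2.val % 2 = 0 then (0 : ZMod 3) else 2) * bb.1
            = (if kk.1.val % 2 = 0 then (0 : ZMod 3) else 2) * bb.2 then 1 else 0)
        = if kk.1.val % 2 = 0 ∧ kk.2.val % 2 = 0 then 9 else 3 := by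
    intro kk
    by_cases h1 : kk.1.val % 2 = 0 <;> by_cases h2 : kk.2.val % 2 = 0 <;>
      simp only [h1, h2, if_true, if_false, true_and, false_and, and_true, and_false] <;>
      decide
  rw [Finset.sum_congr rfl (fun kk _ => inner kk), Fintype.sum_prod_type]
  have inner2 : ∀ k1 : ZMod (2*n),
      (∑ k2 : ZMod (2*n), if k1.val % 2 = 0 ∧ k2.val % 2 = 0 then 9 else 3)
        = if k1.val % 2 = 0 then 12*n else 6*n := by
    intro k1
    by_cases h1 : k1.val % 2 = 0
    · simp only [h1, true_and, if_true]
      rw [sum_parity n 9 3]; ring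
    · simp only [h1, false_and, if_false, Finset.sum_const, Finset.card_univ, ZMod.card,
        smul_eq_mul]
      ring
  rw [Finset.sum_congr rfl (fun k1 _ => inner2 k1), sum_parity n (12*n) (6*n)]
  ring

/-- pair coordinates equivalence -/
def ePair (n : ℕ) : (U6n n × U6n n) ≃ (ZMod (2*n) × ZMod (2*n)) × (ZMod 3 × ZMod 3) where
  toFun p := ((Multiplicative.toAdd p.1.right, Multiplicative.toAdd p.2.right),
    (Multiplicative.toAdd p.1.left, Multiplicative.toAdd p.2.left))
  invFun q := (⟨Multiplicative.ofAdd q.2.1, Multiplicative.ofAdd q.1.1⟩,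
    ⟨Multiplicative.ofAdd q.2.2, Multiplicative.ofAdd q.1.2⟩)
  left_inv p := rfl
  right_inv q := rfl


/-- The number of edges of the non-commuting graph of `U_{6n}` is `9n²`. -/
theorem U6n_edge_count (n : ℕ) (hn : 1 ≤ n) :
    ((ncGraph n).edgeSet).ncard = 9 * n ^ 2 := by
  haveI : NeZero (2*n) := ⟨by omega⟩
  haveI : Fintype (U6n n) := Fintype.ofEquiv _ (eU n).symm
  classical
  have hedge : ((ncGraph n).edgeSet).ncard = (ncGraph n).edgeFinset.card :=
    Set.ncard_eq_toFinset_card' _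
  have hdart := SimpleGraph.dart_card_eq_twice_card_edges (ncGraph n)
  let E : (ncGraph n).Dart ≃ {p : U6n n × U6n n // ¬ p.1*p.2 = p.2*p.1} :=
  { toFun := fun d => ⟨(d.toProd.1.val, d.toProd.2.val), d.adj⟩
    invFun := fun p => ⟨(⟨p.1.1, fun hc => p.2 ((Subgroup.mem_center_iff.mp hc p.1.2).symm)⟩,
        ⟨p.1.2, fun hc => p.2 (Subgroup.mem_center_iff.mp hc p.1.1)⟩), p.2⟩
    left_inv := fun d => rfl
    right_inv := fun p => rfl }
  have hcomm : Fintype.card {p : U6n n × U6n n // p.1*p.2 = p.2*p.1} = 18 * n^2 := by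
    have E2 : {p : U6n n × U6n n // p.1*p.2 = p.2*p.1} ≃
        {q : (ZMod (2*n) × ZMod (2*n)) × (ZMod 3 × ZMod 3) //
          (if q.1.2.val % 2 = 0 then (0 : ZMod 3) else 2) * q.2.1
            = (if q.1.1.val % 2 = 0 then (0 : ZMod 3) else 2) * q.2.2} :=
      Equiv.subtypeEquiv (ePair n) (fun p => commute_iff n p.1 p.2)
    rw [Fintype.card_congr E2, Fintype.card_subtype, countQ n]
  have hU : Fintype.card (U6n n) = 6 * n := by
    rw [Fintype.card_congr (eU n), Fintype.card_prod, ZMod.card, ZMod.card]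
    ring
  have hD : Fintype.card (ncGraph n).Dart = 18 * n^2 := by
    rw [Fintype.card_congr E, Fintype.card_subtype_compl, hcomm, Fintype.card_prod, hU]
    have h36 : 6*n*(6*n) = 36 * n^2 := by ring
    have h18 : 18 * n^2 + 18 * n^2 = 36 * n^2 := by ring
    omega
  rw [hedge]
  rw [hD] at hdart
  omega
end

section
/- For every integer n ≥ 1, the non-commuting graph Γ(U_{6n}) contains no induced 5-cycle: there is no set S of five vertices of Γ(U_{6n}) such that the subgraph of Γ(U_{6n}) induced on S is isomorphic to the cycle C₅. -/
lemma act_one (n : ℕ) : U6nAct n (Multiplicative.ofAdd 1) = negAut := by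
  have h : ∀ (f : ZMod (2*n) →+ Additive (MulAut (Multiplicative (ZMod 3)))),
      (AddMonoidHom.toMultiplicativeLeft f) (Multiplicative.ofAdd 1) = Additive.toMul (f 1) :=
    fun f => rfl
  unfold U6nAct
  rw [h, show (1 : ZMod (2*n)) = ((1 : ℤ) : ZMod (2*n)) by push_cast; rfl, ZMod.lift_coe]
  simp

lemma negAut_pow_s13 (k : ℕ) : negAut ^ k = 1 ∨ negAut ^ k = negAut := by
  induction k with
  | zero => left; rfl
  | succ m ih =>
    rcases ih with h | h
    · right; rw [pow_succ, h, one_mul]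
    · left; rw [pow_succ, h, negAut_sq]

lemma act_cases (n : ℕ) [NeZero (2 * n)] (y : Multiplicative (ZMod (2 * n))) :
    U6nAct n y = 1 ∨ U6nAct n y = negAut := by
  have hy : y = (Multiplicative.ofAdd (1 : ZMod (2*n))) ^ (Multiplicative.toAdd y).val := by
    rw [← ofAdd_nsmul, nsmul_eq_mul, mul_one, ZMod.natCast_rightInverse (Multiplicative.toAdd y)]
    rfl
  rw [hy, map_pow, act_one]
  exact negAut_pow_s13 _

lemma comm_iff {n : ℕ} (g h : U6n n) :
    g * h = h * g ↔ g.left * U6nAct n g.right h.left = h.left * U6nAct n h.right g.left := by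
  constructor
  · intro e; exact congrArg SemidirectProduct.left e
  · intro e
    apply SemidirectProduct.ext
    · exact e
    · exact mul_comm _ _

lemma central_of {n : ℕ} (g : U6n n) (h1 : g.left = 1) (h2 : U6nAct n g.right = 1) :
    g ∈ Subgroup.center (U6n n) := by
  rw [Subgroup.mem_center_iff]
  intro h
  rw [comm_iff, h1, h2]
  simp

lemma negAut_apply (x : Multiplicative (ZMod 3)) : negAut x = x⁻¹ := rfl

lemma comm_trans {n : ℕ} [NeZero (2 * n)] (u v w : U6n n)
    (hu : u ∉ Subgroup.center (U6n n)) (hv : v ∉ Subgroup.center (U6n n))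
    (hw : w ∉ Subgroup.center (U6n n))
    (huv : u * v = v * u) (hvw : v * w = w * v) : u * w = w * u := by
  rw [comm_iff] at huv hvw ⊢
  rcases act_cases n u.right with hau | hau <;>
  rcases act_cases n v.right with hav | hav <;>
  rcases act_cases n w.right with haw | haw <;>
    rw [hau, hav] at huv <;> rw [hav, haw] at hvw <;> rw [hau, haw] <;>
    simp only [MulAut.one_apply, negAut_apply] at *
  · -- all trivial: commute
    rw [mul_comm]
  · -- u,v trivial, w neg: v central contradiction
    exact absurd (central_of v (by
      have := hvw
      revert this
      generalize v.left = x; generalize w.left = y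
      revert x y; decide) hav) hv
  · exact absurd (central_of u (by
      have := huv
      revert this
      generalize u.left = x; generalize v.left = y
      revert x y; decide) hau) hu
  · exact absurd (central_of u (by
      have := huv
      revert this
      generalize u.left = x; generalize v.left = y
      revert x y; decide) hau) hu
  · exact absurd (central_of v (by
      have := huv
      revert this
      generalize u.left = x; generalize v.left = y
      revert x y; decide) hav) hv
  · exact absurd (central_of v (by
      have := huv
      revert this
      generalize u.left = x; generalize v.left = y
      revert x y; decide) hav) hv
  · exact absurd (central_of w (by
      have := hvw
      revert this
      generalize v.left = x; generalize w.left = y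
      revert x y; decide) haw) hw
  · -- all neg: u.left = v.left = w.left
    revert huv hvw
    generalize u.left = x; generalize v.left = y; generalize w.left = z
    revert x y z; decide

/-- The non-commuting graph of `U_{6n}` contains no induced 5-cycle: no set of five
vertices induces a subgraph isomorphic to the cycle `C₅`. -/
theorem U6n_no_induced_C5 (n : ℕ) (hn : 1 ≤ n) :
    ¬ ∃ S : Set {x : U6n n // x ∉ Subgroup.center (U6n n)},
      S.ncard = 5 ∧
        Nonempty ((ncGraph n).induce S ≃g SimpleGraph.cycleGraph 5) := by
  rintro ⟨S, -, ⟨e⟩⟩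
  haveI : NeZero (2 * n) := ⟨by omega⟩
  set u : Fin 5 → {x : U6n n // x ∉ Subgroup.center (U6n n)} :=
    fun i => ((e.symm i : ↥S) : {x : U6n n // x ∉ Subgroup.center (U6n n)}) with hu
  have key : ∀ i j : Fin 5, ¬ (SimpleGraph.cycleGraph 5).Adj i j →
      (u i).val * (u j).val = (u j).val * (u i).val := by
    intro i j h
    by_contra hne
    exact h (e.symm.map_adj_iff.mp hne)
  have h02 := key 0 2 (by decide)
  have h24 := key 2 4 (by decide)
  have h04 := comm_trans ((u 0) : U6n n) (u 2) (u 4) (u 0).2 (u 2).2 (u 4).2 h02 h24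
  have hadj : (SimpleGraph.cycleGraph 5).Adj 0 4 := by decide
  exact e.symm.map_adj_iff.mpr hadj h04
end
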